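/- Let ρ be a positive integer, let Q ∈ ℝ^{n×n} and G₀ ∈ ℝ^{n×n} be symmetric, and for i = 0,…,ρ let Wᵢ ∈ ℝ^{n×n} be symmetric positive definite and Sᵢ ∈ ℝ^{n×q_i} have linearly independent columns. Assume the weighting matrices satisfy the action constraint Wᵢ·Sᵢ = Q·Sᵢ for all 0 ≤ i ≤ ρ, and that Sₖᵀ·Q·Sᵢ = 0 whenever 0 ≤ i < k ≤ ρ. Define iteratively G_{k+1} := Q + (I − Wₖ·P(Sₖ,Wₖ))·(Gₖ − Q)·(I − P(Sₖ,Wₖ)·Wₖ), where P(Sₖ,Wₖ) := Sₖ(SₖᵀWₖSₖ)⁻¹Sₖᵀ. Then the estimate G_{k+1} satisfies the quadratic hereditary property: G_{k+1}·Sᵢ = Q·Sᵢ for all 0 ≤ i ≤ k ≤ ρ. -/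

import Mathlib

open Matrix

/-- The projection-type matrix `P(S,W) := S (Sᵀ W S)⁻¹ Sᵀ`. -/
noncomputable def projMat {n q : ℕ} (S : Matrix (Fin n) (Fin q) ℝ)
    (W : Matrix (Fin n) (Fin n) ℝ) : Matrix (Fin n) (Fin n) ℝ :=
  S * (Sᵀ * W * S)⁻¹ * Sᵀ

lemma aux_posdef {n q : ℕ} {S : Matrix (Fin n) (Fin q) ℝ} {W : Matrix (Fin n) (Fin n) ℝ}
    (hW : W.PosDef) (hS : LinearIndependent ℝ (fun j : Fin q => Sᵀ j)) :
    (Sᵀ * W * S).PosDef := by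
  have hinj : Function.Injective S.mulVec := by
    have := Matrix.vecMul_injective_iff.mpr hS
    intro x y hxy
    apply this
    change x ᵥ* Sᵀ = y ᵥ* Sᵀ; simp only [vecMul_transpose]; exact hxy
  refine Matrix.PosDef.of_dotProduct_mulVec_pos ?_ ?_
  · have h := Matrix.isHermitian_conjTranspose_mul_mul S hW.1
    simpa using h
  · intro x hx
    have hSx : S *ᵥ x ≠ 0 := fun h => hx (hinj (by simpa using h))
    have := hW.dotProduct_mulVec_pos hSx
    have e : star x ⬝ᵥ (Sᵀ * W * S) *ᵥ x = star (S *ᵥ x) ⬝ᵥ W *ᵥ (S *ᵥ x) := by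
      simp [star_mulVec, dotProduct_mulVec, ← Matrix.vecMul_vecMul, Matrix.vecMul_transpose]
    rw [e]; exact this

/-- Quadratic hereditary when the weighting matrices satisfy the action constraint
`Wᵢ·Sᵢ = Q·Sᵢ` and the sampling matrices are mutually `Q`-orthogonal. -/
theorem stmt5 {n : ℕ} (ρ : ℕ) (hρ : 0 < ρ)
    (Q G₀ : Matrix (Fin n) (Fin n) ℝ) (hQ : Q.IsSymm) (hG₀ : G₀.IsSymm)
    (q : ℕ → ℕ)
    (W : ℕ → Matrix (Fin n) (Fin n) ℝ)
    (S : (k : ℕ) → Matrix (Fin n) (Fin (q k)) ℝ)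
    (hW : ∀ i ≤ ρ, (W i).PosDef)
    (hSli : ∀ i ≤ ρ, LinearIndependent ℝ (fun j : Fin (q i) => (S i)ᵀ j))
    (haction : ∀ i ≤ ρ, W i * S i = Q * S i)
    (horth : ∀ i k : ℕ, i < k → k ≤ ρ → (S k)ᵀ * Q * S i = 0)
    (G : ℕ → Matrix (Fin n) (Fin n) ℝ)
    (hG0 : G 0 = G₀)
    (hrec : ∀ k ≤ ρ, G (k + 1) =
      Q + (1 - W k * projMat (S k) (W k)) * (G k - Q) * (1 - projMat (S k) (W k) * W k)) :
    ∀ i k : ℕ, i ≤ k → k ≤ ρ → G (k + 1) * S i = Q * S i := by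
  -- general step lemma
  have key : ∀ k ≤ ρ, ∀ i ≤ k, (i < k → G k * S i = Q * S i) → G (k + 1) * S i = Q * S i := by
    intro k hk i hik hprev
    have hMunit : IsUnit ((S k)ᵀ * W k * S k) := (aux_posdef (hW k hk) (hSli k hk)).isUnit
    have hM : ((S k)ᵀ * W k * S k)⁻¹ * ((S k)ᵀ * W k * S k) = 1 :=
      Matrix.nonsing_inv_mul _ ((Matrix.isUnit_iff_isUnit_det _).mp hMunit)
    have hWsymm : (W k)ᵀ = W k := by
      have := (hW k hk).1
      exact (show (W k).IsSymm by simpa using this).eq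
    have hSW : (S k)ᵀ * W k = (S k)ᵀ * Q := by
      calc (S k)ᵀ * W k = (S k)ᵀ * (W k)ᵀ := by rw [hWsymm]
        _ = (W k * S k)ᵀ := by rw [Matrix.transpose_mul]
        _ = (Q * S k)ᵀ := by rw [haction k hk]
        _ = (S k)ᵀ * Qᵀ := by rw [Matrix.transpose_mul]
        _ = (S k)ᵀ * Q := by rw [hQ.eq]
    rw [hrec k hk, Matrix.add_mul, Matrix.mul_assoc]
    rcases eq_or_lt_of_le hik with heq | hlt
    · subst heq
      have hB : (1 - projMat (S i) (W i) * W i) * S i = 0 := by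
        unfold projMat
        rw [Matrix.sub_mul, Matrix.one_mul, sub_eq_zero]
        symm
        calc S i * ((S i)ᵀ * W i * S i)⁻¹ * (S i)ᵀ * W i * S i
            = S i * (((S i)ᵀ * W i * S i)⁻¹ * ((S i)ᵀ * W i * S i)) := by
              simp only [Matrix.mul_assoc]
          _ = S i := by rw [hM, Matrix.mul_one]
      rw [hB, Matrix.mul_zero, add_zero]
    · have hPz : projMat (S k) (W k) * W k * S i = 0 := by
        unfold projMat
        calc S k * ((S k)ᵀ * W k * S k)⁻¹ * (S k)ᵀ * W k * S i
            = S k * ((S k)ᵀ * W k * S k)⁻¹ * ((S k)ᵀ * W k * S i) := by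
              simp only [Matrix.mul_assoc]
          _ = 0 := by
              have h0 : (S k)ᵀ * W k * S i = 0 := by
                rw [hSW]; exact horth i k hlt hk
              rw [h0, Matrix.mul_zero]
      have hB : (1 - projMat (S k) (W k) * W k) * S i = S i := by
        rw [Matrix.sub_mul, Matrix.one_mul, Matrix.mul_assoc, ← Matrix.mul_assoc, hPz, sub_zero]
      rw [hB, Matrix.mul_assoc, Matrix.sub_mul (G k) Q (S i), hprev hlt, sub_self, Matrix.mul_zero, add_zero]
  intro i k hik hk
  induction k with
  | zero => exact key 0 hk i hik (by omega)
  | succ m ih =>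
    exact key (m + 1) hk i hik (fun hlt => ih (by omega) (by omega))
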